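/- (Ashikhmin–Barg condition) Let C be a linear code over F_q with minimum nonzero weight d and maximum weight w. If d/w > (q−1)/q, then C is a minimal code. -/

import Mathlib

/-- Hamming weight of a vector. -/
noncomputable def hwt {ι F : Type*} [Zero F] (v : ι → F) : ℕ := {i | v i ≠ 0}.ncard

/-- A code is minimal if the support of every nonzero codeword contains the support of no
nonzero codeword other than its scalar multiples. -/
def IsMinimalCode {F ι : Type*} [Field F] (C : Set (ι → F)) : Prop :=
  ∀ c ∈ C, c ≠ 0 → ∀ c' ∈ C, c' ≠ 0 → {i | c' i ≠ 0} ⊆ {i | c i ≠ 0} →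
    ∃ l : F, l ≠ 0 ∧ c' = l • c

lemma hwt_eq {ι F : Type*} [Zero F] [Fintype ι] [DecidableEq F] (v : ι → F) :
    hwt v = (Finset.univ.filter fun i => v i ≠ 0).card := by
  classical
  simp [hwt, Set.ncard_eq_toFinset_card', Set.toFinset_setOf]

/-- Ashikhmin–Barg condition: a linear code over `F_q` with minimum nonzero weight `d`
and maximum weight `w` satisfying `d/w > (q-1)/q` is minimal. -/
theorem AB_condition {F ι : Type*} [Field F] [Fintype F] [Fintype ι]
    (C : Submodule F (ι → F)) (d w : ℕ)
    (hd : ∀ c ∈ C, c ≠ 0 → d ≤ hwt c) (hw : ∀ c ∈ C, hwt c ≤ w)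
    (h : (d : ℚ) / w > ((Fintype.card F : ℚ) - 1) / (Fintype.card F)) :
    IsMinimalCode (C : Set (ι → F)) := by
  classical
  intro c hc hc0 c' hc' hc'0 hsub
  by_contra hcon
  push_neg at hcon
  set q := Fintype.card F with hq
  have hq2 : 2 ≤ q := Fintype.one_lt_card
  have hqQ : (0:ℚ) < q := by positivity
  have h1q : (1:ℚ) ≤ q := by exact_mod_cast Nat.one_le_of_lt hq2
  have hw0 : 0 < w := by
    by_contra hw0
    have hwz : w = 0 := by omega
    rw [hwz] at h
    simp at h
    have : (0:ℚ) ≤ ((q:ℚ) - 1) / q := by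
      apply div_nonneg _ (le_of_lt hqQ); linarith
    linarith
  have hne : ∀ l : F, c' - l • c ≠ 0 := by
    intro l h0
    have hcl : c' = l • c := by rwa [sub_eq_zero] at h0
    rcases eq_or_ne l 0 with rfl | hl
    · simp at hcl; exact hc'0 hcl
    · exact (hcon l hl) hcl
  have hmem : ∀ l : F, c' - l • c ∈ C := fun l => C.sub_mem hc' (C.smul_mem l hc)
  -- key counting identity
  have key : ∑ l : F, hwt (c' - l • c) = (q - 1) * hwt c := by
    simp only [hwt_eq, Finset.card_filter]
    rw [Finset.sum_comm]
    have step : ∀ i : ι, (∑ l : F, if (c' - l • c) i ≠ 0 then 1 else 0) =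
        if c i ≠ 0 then q - 1 else 0 := by
      intro i
      by_cases hci : c i = 0
      · have hc'i : c' i = 0 := by
          by_contra hne'
          exact hsub hne' hci
        simp [hci, hc'i]
      · simp only [hci, ne_eq, not_false_eq_true, if_true]
        have hset : (Finset.univ.filter fun l : F => ¬ (c' - l • c) i = 0) =
            Finset.univ \ {c' i / c i} := by
          ext l
          simp only [Finset.mem_filter, Finset.mem_univ, true_and, Finset.mem_sdiff,
            Finset.mem_singleton, Pi.sub_apply, Pi.smul_apply, smul_eq_mul, sub_eq_zero]
          constructor
          · intro hne' heq; exact hne' (by rw [heq]; field_simp)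
          · intro hne' heq; apply hne'; rw [heq]; field_simp
        rw [← Finset.card_filter, hset, Finset.card_sdiff_of_subset (by simp)]
        simp [hq]
    rw [Finset.sum_congr rfl (fun i _ => step i), ← Finset.sum_filter,
      Finset.sum_const, smul_eq_mul, mul_comm, Finset.card_filter]
  -- lower bound
  have hlow : q * d ≤ ∑ l : F, hwt (c' - l • c) := by
    calc q * d = ∑ _l : F, d := by simp [hq, mul_comm]
    _ ≤ _ := Finset.sum_le_sum fun l _ => hd _ (hmem l) (hne l)
  have hup : (q - 1) * hwt c ≤ (q - 1) * w := by
    exact Nat.mul_le_mul_left _ (hw c hc)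
  have hnat : q * d ≤ (q - 1) * w := le_trans (key ▸ hlow) hup
  -- rational contradiction
  have hQ : ((q:ℚ) - 1) * w < d * q := by
    rw [gt_iff_lt, div_lt_div_iff₀ hqQ (by exact_mod_cast hw0)] at h
    linarith
  have hQ2 : ((q*d : ℕ):ℚ) ≤ (((q-1)*w : ℕ):ℚ) := Nat.cast_le.mpr hnat
  rw [Nat.cast_mul, Nat.cast_mul, Nat.cast_sub (by omega : 1 ≤ q), Nat.cast_one] at hQ2
  linarith
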